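/- There is a constant d > 0 such that the set of positive integers n with the following property has natural density 1: every 2-dimensional tile system (of temperature 1 or 2) that terminally assembles an n×n square with probability greater than 1/2 has tile complexity at least d·(log n)/(log log n). In particular, for almost all n, the minimum tile complexity required to assemble an n×n square with probability greater than 1/2 is Ω(log n / log log n). -/

import Mathlib

/-- A 2D tile type: four glues drawn from `ℕ`, with `0` the `null` glue. -/
structure Tile2 where
  north : ℕ
  east : ℕ
  south : ℕ
  west : ℕ
deriving DecidableEq

/-- A 2D tile system `⟨T, s, τ⟩` together with the glue-strength function.
The glue function satisfies `G(x,y) = 0` for `x ≠ y`, so it is determined by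
the diagonal `strength`; `strength 0 = 0` encodes `G(null,·) = 0`. -/
structure TileSystem2 where
  tiles : Finset Tile2
  seed : Tile2
  strength : ℕ → ℕ
  temp : ℕ
  seed_mem : seed ∈ tiles
  null_strength : strength 0 = 0

/-- A configuration: a map `ℤ² → T ∪ {empty}`. -/
abbrev Config2 := ℤ × ℤ → Option Tile2

/-- Attach tile `t` at position `p`. -/
def place2 (C : Config2) (t : Tile2) (p : ℤ × ℤ) : Config2 :=
  Function.update C p (some t)

/-- The shape of a configuration: its set of non-empty positions. -/
def shape2 (C : Config2) : Set (ℤ × ℤ) := {p | C p ≠ none}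

namespace TileSystem2

variable (S : TileSystem2)

/-- Bond strength between two abutting glues: `G(x,y)`. -/
def bond (g h : ℕ) : ℕ := if g = h then S.strength g else 0

/-- Bond contributed by the neighbour at position `p` against glue `g`,
where `side` extracts the abutting side of the neighbouring tile. -/
def sideBond (C : Config2) (p : ℤ × ℤ) (g : ℕ) (side : Tile2 → ℕ) : ℕ :=
  (C p).elim 0 fun u => S.bond g (side u)

/-- Total binding strength of tile `t` at position `p` in configuration `C`. -/
def bindStrength (C : Config2) (t : Tile2) (p : ℤ × ℤ) : ℕ :=
  S.sideBond C (p.1, p.2 + 1) t.north Tile2.south +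
  S.sideBond C (p.1 + 1, p.2) t.east Tile2.west +
  S.sideBond C (p.1, p.2 - 1) t.south Tile2.north +
  S.sideBond C (p.1 - 1, p.2) t.west Tile2.east

/-- `t` is attachable to `C` at the empty position `p` if the total glue
strength with the four neighbours is at least the temperature. -/
def Attachable (C : Config2) (t : Tile2) (p : ℤ × ℤ) : Prop :=
  t ∈ S.tiles ∧ C p = none ∧ S.temp ≤ S.bindStrength C t p

/-- One assembly step: attachment of a single attachable tile. -/
def AStep (C C' : Config2) : Prop :=
  ∃ t p, S.Attachable C t p ∧ C' = place2 C t p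

/-- The configuration consisting of just the seed tile at the origin. -/
def seedConfig : Config2 := fun p => if p = (0, 0) then some S.seed else none

/-- `C` is reachable from `C₀` by repeated attachments. -/
def ProducedFrom (C₀ C : Config2) : Prop := Relation.ReflTransGen S.AStep C₀ C

/-- `C` is produced: reachable from the seed at the origin. -/
def Produced (C : Config2) : Prop := S.ProducedFrom S.seedConfig C

/-- `C` is terminal: no tile of the system is attachable anywhere. -/
def Terminal (C : Config2) : Prop := ∀ t p, ¬ S.Attachable C t p

/-- A system uniquely produces shape `Υ` if every produced supertile extends to
a terminally produced supertile of shape `Υ`. -/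
def UniquelyProduces (Υ : Set (ℤ × ℤ)) : Prop :=
  ∀ C, S.Produced C → ∃ C', S.ProducedFrom C C' ∧ S.Terminal C' ∧ shape2 C' = Υ

/-- Zig-zag behaviour started from configuration `C₀`:
(i) at every stage exactly one tile attachment is possible, and
(ii) consecutive attachments obey the zig-zag geometry: after attaching at
`p`, the next attachment at `p'` satisfies (`y p` even): `x' = x+1, y'=y` or
`y' = y+1`, and (`y p` odd): `x' = x-1, y'=y` or `y' = y+1`. -/
def ZigZagFrom (C₀ : Config2) : Prop :=
  (∀ C, S.ProducedFrom C₀ C → ¬ S.Terminal C →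
      ∃! tp : Tile2 × (ℤ × ℤ), S.Attachable C tp.1 tp.2) ∧
  (∀ C t p t' p', S.ProducedFrom C₀ C → S.Attachable C t p →
      S.Attachable (place2 C t p) t' p' →
      if p.2 % 2 = 0 then (p'.1 = p.1 + 1 ∧ p'.2 = p.2) ∨ p'.2 = p.2 + 1
      else (p'.1 = p.1 - 1 ∧ p'.2 = p.2) ∨ p'.2 = p.2 + 1)

/-- A temperature-2 zig-zag tile system (the seed counts as the 0-th placed
tile, at `(0,0)`, so the first attachment is constrained as well). -/
def ZigZag : Prop :=
  S.temp = 2 ∧ S.ZigZagFrom S.seedConfig ∧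
  ∀ t' p', S.Attachable S.seedConfig t' p' →
    (p'.1 = 1 ∧ p'.2 = 0) ∨ p'.2 = (1 : ℤ)

/-- `σ_T`: the strength-1 glues occurring on the north or south side of some
tile type of the system. -/
def nsGlues : Finset ℕ :=
  (S.tiles.image Tile2.north ∪ S.tiles.image Tile2.south).filter
    fun g => S.strength g = 1

end TileSystem2
namespace TileSystem2

/-- The number of single-tile attachments currently possible, `|A →_T|`. -/
noncomputable def choices (S : TileSystem2) (C : Config2) : ℕ :=
  Nat.card {tp : Tile2 × (ℤ × ℤ) // S.Attachable C tp.1 tp.2}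

open Classical in
/-- Probability of a particular finite sequence of attachments, starting from
`C`: each step is chosen uniformly among all currently possible attachments. -/
noncomputable def runProb (S : TileSystem2) : Config2 → List (Tile2 × (ℤ × ℤ)) → ℝ
  | _, [] => 1
  | C, tp :: L =>
      (if S.Attachable C tp.1 tp.2 then ((S.choices C : ℝ))⁻¹ else 0) *
        runProb S (place2 C tp.1 tp.2) L

/-- The configuration resulting from a finite sequence of attachments. -/
def runResult (S : TileSystem2) : Config2 → List (Tile2 × (ℤ × ℤ)) → Config2
  | C, [] => C
  | C, tp :: L => runResult S (place2 C tp.1 tp.2) L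

/-- The probability that, starting from `C₀`, the assembly Markov chain is
absorbed in a terminal supertile satisfying `E`: the sum, over all finite
assembly paths ending in such a terminal configuration, of the path
probabilities. -/
noncomputable def probEventFrom (S : TileSystem2) (C₀ : Config2) (E : Config2 → Prop) : ℝ :=
  ∑' L : {L : List (Tile2 × (ℤ × ℤ)) //
      S.Terminal (S.runResult C₀ L) ∧ E (S.runResult C₀ L)},
    S.runProb C₀ L.1

/-- The probability that the system terminally assembles a configuration
satisfying `E`, starting from the seed tile at the origin. -/
noncomputable def probEvent (S : TileSystem2) (E : Config2 → Prop) : ℝ :=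
  S.probEventFrom S.seedConfig E

end TileSystem2
/-- The `w × h` rectangle shape `{0,…,w−1} × {0,…,h−1}` (width `w`, height `h`). -/
def rectShape (w h : ℕ) : Set (ℤ × ℤ) :=
  {p | 0 ≤ p.1 ∧ p.1 < (w : ℤ) ∧ 0 ≤ p.2 ∧ p.2 < (h : ℤ)}

/-- The `n × n` square shape. -/
def squareShape (n : ℕ) : Set (ℤ × ℤ) := rectShape n n

open Classical in
lemma runProb_nonneg (S : TileSystem2) : ∀ (C : Config2) (L : List (Tile2 × (ℤ × ℤ))),
    0 ≤ S.runProb C L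
  | _, [] => by rw [TileSystem2.runProb]; norm_num
  | C, tp :: L => by
      rw [TileSystem2.runProb]
      refine mul_nonneg ?_ (runProb_nonneg S _ L)
      split <;> positivity

open Classical in
lemma card_mul_inv_choices_le_one (S : TileSystem2) (C : Config2)
    (u : Finset (Tile2 × (ℤ × ℤ))) (hu : ∀ tp ∈ u, S.Attachable C tp.1 tp.2) :
    (u.card : ℝ) * ((S.choices C : ℝ))⁻¹ ≤ 1 := by
  rcases finite_or_infinite {tp : Tile2 × (ℤ × ℤ) // S.Attachable C tp.1 tp.2} with h | h
  · rcases u.eq_empty_or_nonempty with rfl | hne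
    · simp
    · have hfin : {tp : Tile2 × (ℤ × ℤ) | S.Attachable C tp.1 tp.2}.Finite :=
        Set.finite_coe_iff.mp h
      have hsub : ↑u ⊆ {tp : Tile2 × (ℤ × ℤ) | S.Attachable C tp.1 tp.2} := by
        intro tp htp
        exact hu tp (by exact_mod_cast htp)
      have hcard : u.card ≤ S.choices C := by
        have := Set.ncard_le_ncard hsub hfin
        rw [Set.ncard_coe_finset, ← Nat.card_coe_set_eq] at this
        exact this
      have hpos : 0 < S.choices C := lt_of_lt_of_le (Finset.card_pos.mpr hne) hcard
      rw [← div_eq_mul_inv, div_le_one (by exact_mod_cast hpos)]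
      exact_mod_cast hcard
  · simp [TileSystem2.choices, Nat.card_eq_zero_of_infinite]

open Classical in
lemma sum_runProb_le_one (S : TileSystem2) :
    ∀ (m : ℕ) (C : Config2) (s : Finset (List (Tile2 × (ℤ × ℤ)))),
      (∀ L ∈ s, S.Terminal (S.runResult C L)) → (∀ L ∈ s, L.length ≤ m) →
      ∑ L ∈ s, S.runProb C L ≤ 1 := by
  intro m
  induction m with
  | zero =>
      intro C s hterm hlen
      have hsub : s ⊆ {([] : List (Tile2 × (ℤ × ℤ)))} := by
        intro L hL
        simpa using List.length_eq_zero_iff.mp (Nat.le_zero.mp (hlen L hL))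
      calc ∑ L ∈ s, S.runProb C L ≤ ∑ L ∈ {([] : List (Tile2 × (ℤ × ℤ)))}, S.runProb C L :=
            Finset.sum_le_sum_of_subset_of_nonneg hsub
              (fun L _ _ => runProb_nonneg S C L)
        _ ≤ 1 := by rw [Finset.sum_singleton, TileSystem2.runProb]
  | succ m ih =>
      intro C s hterm hlen
      by_cases hT : S.Terminal C
      · calc ∑ L ∈ s, S.runProb C L
            ≤ ∑ L ∈ s, (if L = [] then (1 : ℝ) else 0) := by
              refine Finset.sum_le_sum (fun L hL => ?_)
              match L with
              | [] => rw [TileSystem2.runProb]; simp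
              | tp :: L' =>
                  rw [TileSystem2.runProb, if_neg (hT tp.1 tp.2)]
                  simp
          _ = ∑ L ∈ s, (if L = [] then (fun _ => (1:ℝ)) L else 0) := by simp
          _ ≤ 1 := by
              rw [Finset.sum_ite_eq' s ([] : List (Tile2 × (ℤ × ℤ))) (fun _ => (1:ℝ))]
              split <;> norm_num
      · have hnil : ([] : List (Tile2 × (ℤ × ℤ))) ∉ s := by
          intro h
          exact hT (by simpa [TileSystem2.Terminal, TileSystem2.runResult] using hterm [] h)
        set T : Finset (Option (Tile2 × (ℤ × ℤ))) := s.image List.head? with hTdef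
        set c : Option (Tile2 × (ℤ × ℤ)) → ℝ :=
          fun o => o.elim 0 (fun tp =>
            if S.Attachable C tp.1 tp.2 then ((S.choices C : ℝ))⁻¹ else 0) with hcdef
        have hcnonneg : ∀ o, 0 ≤ c o := by
          intro o
          match o with
          | none => simp [hcdef]
          | some tp => simp only [hcdef, Option.elim]; split <;> positivity
        rw [← Finset.sum_fiberwise_of_maps_to
          (fun L hL => Finset.mem_image_of_mem List.head? hL) (S.runProb C)]
        have hfib : ∀ o ∈ T, (∑ L ∈ s.filter (fun L => L.head? = o), S.runProb C L) ≤ c o := by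
          intro o _
          match o with
          | none =>
              set f := s.filter (fun L => L.head? = none) with hfdef
              have hf : f = ∅ := by
                refine Finset.filter_eq_empty_iff.mpr ?_
                intro L hL h
                exact hnil (by simpa [List.head?_eq_none_iff.mp h] using hL)
              rw [hf, Finset.sum_empty]
              simp [hcdef]
          | some tp =>
              set f := s.filter (fun L => L.head? = some tp) with hfdef
              have hhead : ∀ L ∈ f, L = tp :: L.tail := by
                intro L hL
                have h1 : L.head? = some tp := (Finset.mem_filter.mp hL).2
                match L with
                | [] => simp at h1
                | a :: M => simpa using congrArg (fun o => (o.getD tp) :: M) h1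
              have hstep : ∀ L ∈ f, S.runProb C L =
                  c (some tp) * S.runProb (place2 C tp.1 tp.2) L.tail := by
                intro L hL
                conv_lhs => rw [hhead L hL]
                rw [TileSystem2.runProb]
                rfl
              rw [Finset.sum_congr rfl hstep, ← Finset.mul_sum]
              have htail : ∑ L ∈ f, S.runProb (place2 C tp.1 tp.2) L.tail =
                  ∑ M ∈ f.image List.tail, S.runProb (place2 C tp.1 tp.2) M := by
                rw [Finset.sum_image]
                intro L1 h1 L2 h2 he
                rw [hhead L1 h1, hhead L2 h2, he]
              have hle1 : ∑ M ∈ f.image List.tail, S.runProb (place2 C tp.1 tp.2) M ≤ 1 := by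
                refine ih (place2 C tp.1 tp.2) _ ?_ ?_
                · intro M hM
                  rcases Finset.mem_image.mp hM with ⟨L, hL, rfl⟩
                  have := hterm L (Finset.mem_filter.mp hL).1
                  conv at this => rw [hhead L hL]
                  rw [TileSystem2.runResult] at this
                  exact this
                · intro M hM
                  rcases Finset.mem_image.mp hM with ⟨L, hL, rfl⟩
                  have := hlen L (Finset.mem_filter.mp hL).1
                  conv at this => rw [hhead L hL]
                  simpa using Nat.lt_succ_iff.mp this
              rw [htail]
              calc c (some tp) * ∑ M ∈ f.image List.tail, S.runProb (place2 C tp.1 tp.2) M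
                  ≤ c (some tp) * 1 :=
                    mul_le_mul_of_nonneg_left hle1 (hcnonneg (some tp))
                _ = c (some tp) := mul_one _
        refine le_trans (Finset.sum_le_sum hfib) ?_
        -- now bound ∑ o in T, c o ≤ 1
        have hsubT : T ⊆ insert none ((T.eraseNone).image some) := by
          intro o ho
          match o with
          | none => exact Finset.mem_insert_self _ _
          | some tp =>
              exact Finset.mem_insert_of_mem
                (Finset.mem_image_of_mem some (Finset.mem_eraseNone.mpr ho))
        calc ∑ o ∈ T, c o ≤ ∑ o ∈ insert none ((T.eraseNone).image some), c o :=
              Finset.sum_le_sum_of_subset_of_nonneg hsubT (fun o _ _ => hcnonneg o)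
          _ = ∑ o ∈ (T.eraseNone).image some, c o := by
              rw [Finset.sum_insert (by simp)]
              simp [hcdef]
          _ = ∑ tp ∈ T.eraseNone, c (some tp) := by
              rw [Finset.sum_image (fun a _ b _ h => Option.some_injective _ h)]
          _ = ∑ tp ∈ (T.eraseNone).filter (fun tp => S.Attachable C tp.1 tp.2),
                ((S.choices C : ℝ))⁻¹ := by
              rw [Finset.sum_filter]
              rfl
          _ = (((T.eraseNone).filter (fun tp => S.Attachable C tp.1 tp.2)).card : ℝ) *
                ((S.choices C : ℝ))⁻¹ := by
              rw [Finset.sum_const, nsmul_eq_mul]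
          _ ≤ 1 := card_mul_inv_choices_le_one S C _
              (fun tp htp => (Finset.mem_filter.mp htp).2)

lemma sum_runProb_terminal_le_one (S : TileSystem2) (C : Config2)
    (s : Finset (List (Tile2 × (ℤ × ℤ))))
    (hterm : ∀ L ∈ s, S.Terminal (S.runResult C L)) :
    ∑ L ∈ s, S.runProb C L ≤ 1 :=
  sum_runProb_le_one S (s.sup List.length) C s hterm (fun _ hL => Finset.le_sup hL)
lemma summable_probEventFrom (S : TileSystem2) (C₀ : Config2) (E : Config2 → Prop) :
    Summable (fun L : {L : List (Tile2 × (ℤ × ℤ)) //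
        S.Terminal (S.runResult C₀ L) ∧ E (S.runResult C₀ L)} => S.runProb C₀ L.1) := by
  refine summable_of_sum_le (c := 1) (fun L => runProb_nonneg S C₀ L.1) (fun u => ?_)
  rw [← Finset.sum_image (f := fun L => S.runProb C₀ L)
    (g := fun (x : {L : List (Tile2 × (ℤ × ℤ)) //
        S.Terminal (S.runResult C₀ L) ∧ E (S.runResult C₀ L)}) => x.1)
    (fun a _ b _ h => Subtype.ext h)]
  exact sum_runProb_terminal_le_one S C₀ _ (fun L hL => by
    rcases Finset.mem_image.mp hL with ⟨x, _, rfl⟩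
    exact x.2.1)

lemma probEventFrom_pair_le_one (S : TileSystem2) (C₀ : Config2) {E₁ E₂ : Config2 → Prop}
    (hd : ∀ C, E₁ C → E₂ C → False) :
    S.probEventFrom C₀ E₁ + S.probEventFrom C₀ E₂ ≤ 1 := by
  have key : ∀ (u₁ : Finset {L : List (Tile2 × (ℤ × ℤ)) //
        S.Terminal (S.runResult C₀ L) ∧ E₁ (S.runResult C₀ L)})
      (u₂ : Finset {L : List (Tile2 × (ℤ × ℤ)) //
        S.Terminal (S.runResult C₀ L) ∧ E₂ (S.runResult C₀ L)}),
      (∑ x ∈ u₁, S.runProb C₀ x.1) + (∑ x ∈ u₂, S.runProb C₀ x.1) ≤ 1 := by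
    intro u₁ u₂
    classical
    set v₁ := u₁.image (fun x => x.1) with hv₁
    set v₂ := u₂.image (fun x => x.1) with hv₂
    have h₁ : ∑ x ∈ u₁, S.runProb C₀ x.1 = ∑ L ∈ v₁, S.runProb C₀ L :=
      (Finset.sum_image (fun a _ b _ h => Subtype.ext h)).symm
    have h₂ : ∑ x ∈ u₂, S.runProb C₀ x.1 = ∑ L ∈ v₂, S.runProb C₀ L :=
      (Finset.sum_image (fun a _ b _ h => Subtype.ext h)).symm
    have hdis : Disjoint v₁ v₂ := by
      rw [Finset.disjoint_left]
      intro L hL1 hL2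
      rcases Finset.mem_image.mp hL1 with ⟨x, _, rfl⟩
      rcases Finset.mem_image.mp hL2 with ⟨y, _, hy⟩
      exact hd _ x.2.2 (hy ▸ y.2.2)
    rw [h₁, h₂, ← Finset.sum_union hdis]
    exact sum_runProb_terminal_le_one S C₀ _ (fun L hL => by
      rcases Finset.mem_union.mp hL with h | h
      · rcases Finset.mem_image.mp h with ⟨x, _, rfl⟩; exact x.2.1
      · rcases Finset.mem_image.mp h with ⟨x, _, rfl⟩; exact x.2.1)
  have hb : S.probEventFrom C₀ E₂ ≤ 1 - S.probEventFrom C₀ E₁ := by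
    refine Summable.tsum_le_of_sum_le (summable_probEventFrom S C₀ E₂) (fun u₂ => ?_)
    have : S.probEventFrom C₀ E₁ ≤ 1 - ∑ x ∈ u₂, S.runProb C₀ x.1 :=
      Summable.tsum_le_of_sum_le (summable_probEventFrom S C₀ E₁)
        (fun u₁ => by linarith [key u₁ u₂])
    linarith
  linarith [hb]

/-! ### Relabeling glues by a permutation -/

def mapTile (π : ℕ → ℕ) (t : Tile2) : Tile2 := ⟨π t.north, π t.east, π t.south, π t.west⟩

lemma mapTile_comp (π σ : ℕ → ℕ) (t : Tile2) :
    mapTile π (mapTile σ t) = mapTile (π ∘ σ) t := rfl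

def tileEquiv (π : Equiv.Perm ℕ) : Tile2 ≃ Tile2 where
  toFun := mapTile π
  invFun := mapTile π.symm
  left_inv := fun t => by cases t; simp [mapTile]
  right_inv := fun t => by cases t; simp [mapTile]

lemma mapTile_injective (π : Equiv.Perm ℕ) : Function.Injective (mapTile (π : ℕ → ℕ)) :=
  (tileEquiv π).injective

def mapConfig (π : ℕ → ℕ) (C : Config2) : Config2 := fun p => (C p).map (mapTile π)

lemma mapConfig_place2 (π : ℕ → ℕ) (C : Config2) (t : Tile2) (p : ℤ × ℤ) :
    mapConfig π (place2 C t p) = place2 (mapConfig π C) (mapTile π t) p := by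
  funext q
  by_cases hq : q = p <;> simp [mapConfig, place2, Function.update_apply, hq]

lemma shape2_mapConfig (π : ℕ → ℕ) (C : Config2) : shape2 (mapConfig π C) = shape2 C := by
  ext p
  simp [shape2, mapConfig]

/-- The glues occurring in a tile system (always containing `0`). -/
def glues (S : TileSystem2) : Finset ℕ :=
  insert 0 ((S.tiles.image Tile2.north) ∪ (S.tiles.image Tile2.east) ∪
    (S.tiles.image Tile2.south) ∪ (S.tiles.image Tile2.west))

lemma card_glues (S : TileSystem2) : (glues S).card ≤ 4 * S.tiles.card + 1 := by
  refine le_trans (Finset.card_insert_le _ _) ?_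
  have h := Finset.card_union_le ((S.tiles.image Tile2.north) ∪ (S.tiles.image Tile2.east) ∪
    (S.tiles.image Tile2.south)) (S.tiles.image Tile2.west)
  have h2 := Finset.card_union_le ((S.tiles.image Tile2.north) ∪ (S.tiles.image Tile2.east))
    (S.tiles.image Tile2.south)
  have h3 := Finset.card_union_le (S.tiles.image Tile2.north) (S.tiles.image Tile2.east)
  have i1 := Finset.card_image_le (s := S.tiles) (f := Tile2.north)
  have i2 := Finset.card_image_le (s := S.tiles) (f := Tile2.east)
  have i3 := Finset.card_image_le (s := S.tiles) (f := Tile2.south)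
  have i4 := Finset.card_image_le (s := S.tiles) (f := Tile2.west)
  omega

lemma mem_glues {S : TileSystem2} {t : Tile2} (ht : t ∈ S.tiles) :
    t.north ∈ glues S ∧ t.east ∈ glues S ∧ t.south ∈ glues S ∧ t.west ∈ glues S := by
  unfold glues
  refine ⟨Finset.mem_insert_of_mem ?_, Finset.mem_insert_of_mem ?_,
    Finset.mem_insert_of_mem ?_, Finset.mem_insert_of_mem ?_⟩ <;>
      simp only [Finset.mem_union, Finset.mem_image]
  · exact Or.inl (Or.inl (Or.inl ⟨t, ht, rfl⟩))
  · exact Or.inl (Or.inl (Or.inr ⟨t, ht, rfl⟩))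
  · exact Or.inl (Or.inr ⟨t, ht, rfl⟩)
  · exact Or.inr ⟨t, ht, rfl⟩

lemma zero_mem_glues (S : TileSystem2) : 0 ∈ glues S := Finset.mem_insert_self _ _

/-- Existence of a permutation of `ℕ` fixing `0` and mapping a given finite set
with at most `K+1` elements (containing 0) into `{0,…,K}`. -/
lemma exists_perm_maps (K : ℕ) :
    ∀ (j : ℕ) (Γ : Finset ℕ), 0 ∈ Γ → Γ.card ≤ K + 1 →
      (Γ.filter (fun g => K < g)).card ≤ j →
      ∃ π : Equiv.Perm ℕ, π 0 = 0 ∧ ∀ g ∈ Γ, π g ≤ K := by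
  intro j
  induction j with
  | zero =>
      intro Γ _ _ hf
      refine ⟨Equiv.refl ℕ, rfl, fun g hg => ?_⟩
      by_contra h
      push_neg at h
      have : g ∈ Γ.filter (fun g => K < g) := Finset.mem_filter.mpr ⟨hg, h⟩
      rw [Finset.card_eq_zero.mp (Nat.le_zero.mp hf)] at this
      simp at this
  | succ j ih =>
      intro Γ h0 hcard hf
      rcases Finset.eq_empty_or_nonempty (Γ.filter (fun g => K < g)) with hempty | ⟨g, hg⟩
      · refine ⟨Equiv.refl ℕ, rfl, fun g hg => ?_⟩
        by_contra h
        push_neg at h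
        have : g ∈ Γ.filter (fun g => K < g) := Finset.mem_filter.mpr ⟨hg, h⟩
        rw [hempty] at this
        simp at this
      · have hgΓ : g ∈ Γ := (Finset.mem_filter.mp hg).1
        have hgK : K < g := by simpa using (Finset.mem_filter.mp hg).2
        have hb : ∃ b, b ∈ Finset.range (K+1) ∧ b ∉ Γ := by
          by_contra h
          push_neg at h
          have hsub : Finset.range (K+1) ⊆ Γ := fun b hbmem => h b hbmem
          have h1 : insert g (Finset.range (K+1)) ⊆ Γ := Finset.insert_subset hgΓ hsub
          have h2 := Finset.card_le_card h1
          rw [Finset.card_insert_of_notMem (by simp; omega)] at h2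
          rw [Finset.card_range] at h2
          omega
        obtain ⟨b, hbr, hbΓ⟩ := hb
        have hbK : b ≤ K := by
          have := Finset.mem_range.mp hbr
          omega
        have hb0 : b ≠ 0 ∨ True := Or.inr trivial
        set Γ' := insert b (Γ.erase g) with hΓ'
        have h0' : 0 ∈ Γ' :=
          Finset.mem_insert_of_mem (Finset.mem_erase.mpr ⟨by omega, h0⟩)
        have hcard' : Γ'.card ≤ K + 1 := by
          refine le_trans (Finset.card_insert_le _ _) ?_
          rw [Finset.card_erase_of_mem hgΓ]
          have : 1 ≤ Γ.card := Finset.card_pos.mpr ⟨0, h0⟩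
          omega
        have hf' : (Γ'.filter (fun x => K < x)).card ≤ j := by
          have hsub2 : Γ'.filter (fun x => K < x) ⊆ (Γ.filter (fun x => K < x)).erase g := by
            intro x hx
            have hx1 := (Finset.mem_filter.mp hx).1
            have hx2 : K < x := by simpa using (Finset.mem_filter.mp hx).2
            rcases Finset.mem_insert.mp hx1 with rfl | hx'
            · omega
            · exact Finset.mem_erase.mpr ⟨(Finset.mem_erase.mp hx').1,
                Finset.mem_filter.mpr ⟨(Finset.mem_erase.mp hx').2, by simpa using hx2⟩⟩
          have := Finset.card_le_card hsub2
          rw [Finset.card_erase_of_mem hg] at this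
          have hpos : 1 ≤ (Γ.filter (fun g => K < g)).card := Finset.card_pos.mpr ⟨g, hg⟩
          omega
        obtain ⟨π', hπ'0, hπ'⟩ := ih Γ' h0' hcard' hf'
        refine ⟨(Equiv.swap g b).trans π', ?_, ?_⟩
        · have h1 : Equiv.swap g b 0 = 0 :=
            Equiv.swap_apply_of_ne_of_ne (by omega) (fun h => hbΓ (h ▸ h0))
          simp [Equiv.trans_apply, h1, hπ'0]
        · intro x hx
          by_cases hxg : x = g
          · subst hxg
            simp only [Equiv.trans_apply, Equiv.swap_apply_left]
            exact hπ' b (Finset.mem_insert_self _ _)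
          · have hxb : x ≠ b := fun h => hbΓ (h ▸ hx)
            simp only [Equiv.trans_apply, Equiv.swap_apply_of_ne_of_ne hxg hxb]
            exact hπ' x (Finset.mem_insert_of_mem (Finset.mem_erase.mpr ⟨hxg, hx⟩))
/-! ### The canonical relabeled system -/

/-- Relabel a tile system by a permutation fixing 0, capping strengths at 2 and
truncating the strength function beyond the used glue range. -/
noncomputable def canon (S : TileSystem2) (π : Equiv.Perm ℕ) (hπ0 : π 0 = 0) :
    TileSystem2 where
  tiles := S.tiles.image (mapTile π)
  seed := mapTile (π : ℕ → ℕ) S.seed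
  strength := fun x => if x ≤ 4 * S.tiles.card then min (S.strength (π.symm x)) 2 else 0
  temp := S.temp
  seed_mem := Finset.mem_image_of_mem _ S.seed_mem
  null_strength := by
    have h0 : π.symm 0 = 0 := by
      rw [Equiv.symm_apply_eq, hπ0]
    simp [h0, S.null_strength]

section Canon

variable (S : TileSystem2) (π : Equiv.Perm ℕ) (hπ0 : π 0 = 0)

lemma canon_strength_eq (hmaps : ∀ g ∈ glues S, π g ≤ 4 * S.tiles.card) {g : ℕ} (hg : g ∈ glues S) :
    (canon S π hπ0).strength (π g) = min (S.strength g) 2 := by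
  show (if π g ≤ 4 * S.tiles.card then min (S.strength (π.symm (π g))) 2 else 0) = _
  rw [if_pos (hmaps g hg), Equiv.symm_apply_apply]

lemma canon_bond (hmaps : ∀ g ∈ glues S, π g ≤ 4 * S.tiles.card) {g : ℕ} (hg : g ∈ glues S) (h : ℕ) :
    (canon S π hπ0).bond (π g) (π h) = min (S.bond g h) 2 := by
  unfold TileSystem2.bond
  by_cases he : g = h
  · subst he
    simp [canon_strength_eq S π hπ0 hmaps hg]
  · rw [if_neg (fun hc => he (π.injective hc)), if_neg he]
    simp

lemma canon_sideBond (hmaps : ∀ g ∈ glues S, π g ≤ 4 * S.tiles.card) {g : ℕ} (hg : g ∈ glues S) (C : Config2) (q : ℤ × ℤ)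
    (side : Tile2 → ℕ) (hside : ∀ u, side (mapTile π u) = π (side u)) :
    (canon S π hπ0).sideBond (mapConfig π C) q (π g) side =
      min (S.sideBond C q g side) 2 := by
  unfold TileSystem2.sideBond
  cases hC : C q with
  | none => simp [mapConfig, hC]
  | some u =>
      simp only [mapConfig, hC, Option.map_some, Option.elim]
      rw [hside u]
      exact canon_bond S π hπ0 hmaps hg (side u)

lemma canon_bindStrength (hmaps : ∀ g ∈ glues S, π g ≤ 4 * S.tiles.card) (hτ : S.temp ≤ 2) {t : Tile2} (ht : t ∈ S.tiles) (C : Config2) (p : ℤ × ℤ) :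
    (S.temp ≤ (canon S π hπ0).bindStrength (mapConfig π C) (mapTile π t) p ↔
      S.temp ≤ S.bindStrength C t p) := by
  obtain ⟨hN, hE, hS, hW⟩ := mem_glues ht
  unfold TileSystem2.bindStrength
  have e1 := canon_sideBond S π hπ0 hmaps (g := t.north) hN C (p.1, p.2 + 1) Tile2.south
    (fun u => rfl)
  have e2 := canon_sideBond S π hπ0 hmaps (g := t.east) hE C (p.1 + 1, p.2) Tile2.west
    (fun u => rfl)
  have e3 := canon_sideBond S π hπ0 hmaps (g := t.south) hS C (p.1, p.2 - 1) Tile2.north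
    (fun u => rfl)
  have e4 := canon_sideBond S π hπ0 hmaps (g := t.west) hW C (p.1 - 1, p.2) Tile2.east
    (fun u => rfl)
  rw [show (mapTile (π : ℕ → ℕ) t).north = π t.north from rfl,
    show (mapTile (π : ℕ → ℕ) t).east = π t.east from rfl,
    show (mapTile (π : ℕ → ℕ) t).south = π t.south from rfl,
    show (mapTile (π : ℕ → ℕ) t).west = π t.west from rfl,
    e1, e2, e3, e4]
  omega

lemma canon_mem_tiles {t : Tile2} :
    mapTile π t ∈ (canon S π hπ0).tiles ↔ t ∈ S.tiles := by
  show mapTile π t ∈ S.tiles.image (mapTile π) ↔ _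
  constructor
  · intro h
    rcases Finset.mem_image.mp h with ⟨t₀, ht₀, he⟩
    exact (mapTile_injective π he) ▸ ht₀
  · exact Finset.mem_image_of_mem _

lemma canon_attachable (hmaps : ∀ g ∈ glues S, π g ≤ 4 * S.tiles.card) (hτ : S.temp ≤ 2) (C : Config2) (t : Tile2) (p : ℤ × ℤ) :
    (canon S π hπ0).Attachable (mapConfig π C) (mapTile π t) p ↔ S.Attachable C t p := by
  unfold TileSystem2.Attachable
  have hmem := canon_mem_tiles S π hπ0 (t := t)
  have hnone : (mapConfig π C) p = none ↔ C p = none := by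
    simp [mapConfig]
  constructor
  · rintro ⟨h1, h2, h3⟩
    have ht := hmem.mp h1
    exact ⟨ht, hnone.mp h2, (canon_bindStrength S π hπ0 hmaps hτ ht C p).mp (by exact h3)⟩
  · rintro ⟨h1, h2, h3⟩
    exact ⟨hmem.mpr h1, hnone.mpr h2,
      (canon_bindStrength S π hπ0 hmaps hτ h1 C p).mpr (by exact h3)⟩

lemma canon_terminal (hmaps : ∀ g ∈ glues S, π g ≤ 4 * S.tiles.card) (hτ : S.temp ≤ 2) (C : Config2) :
    (canon S π hπ0).Terminal (mapConfig π C) ↔ S.Terminal C := by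
  constructor
  · intro h t p hA
    exact h (mapTile π t) p ((canon_attachable S π hπ0 hmaps hτ C t p).mpr hA)
  · intro h t' p hA
    obtain ⟨t, _, rfl⟩ := Finset.mem_image.mp hA.1
    exact h t p ((canon_attachable S π hπ0 hmaps hτ C t p).mp hA)

lemma canon_choices (hmaps : ∀ g ∈ glues S, π g ≤ 4 * S.tiles.card) (hτ : S.temp ≤ 2) (C : Config2) :
    (canon S π hπ0).choices (mapConfig π C) = S.choices C := by
  unfold TileSystem2.choices
  refine Nat.card_congr (Equiv.symm ?_)
  refine Equiv.subtypeEquiv ((tileEquiv π).prodCongr (Equiv.refl (ℤ × ℤ))) ?_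
  intro tp
  exact (canon_attachable S π hπ0 hmaps hτ C tp.1 tp.2).symm

/-- The list relabeling map. -/
def mapL (π : Equiv.Perm ℕ) : List (Tile2 × (ℤ × ℤ)) → List (Tile2 × (ℤ × ℤ)) :=
  List.map (fun tp => (mapTile π tp.1, tp.2))

def listEquiv (π : Equiv.Perm ℕ) :
    List (Tile2 × (ℤ × ℤ)) ≃ List (Tile2 × (ℤ × ℤ)) where
  toFun := mapL π
  invFun := mapL π.symm
  left_inv := by
    intro L
    unfold mapL
    rw [List.map_map]
    have : ((fun tp : Tile2 × (ℤ × ℤ) => (mapTile (π.symm : ℕ → ℕ) tp.1, tp.2)) ∘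
        fun tp => (mapTile (π : ℕ → ℕ) tp.1, tp.2)) = id := by
      funext tp
      simp only [Function.comp_apply, id_eq]
      exact Prod.ext ((tileEquiv π).left_inv tp.1) rfl
    rw [this, List.map_id]
  right_inv := by
    intro L
    unfold mapL
    rw [List.map_map]
    have : ((fun tp : Tile2 × (ℤ × ℤ) => (mapTile (π : ℕ → ℕ) tp.1, tp.2)) ∘
        fun tp => (mapTile (π.symm : ℕ → ℕ) tp.1, tp.2)) = id := by
      funext tp
      simp only [Function.comp_apply, id_eq]
      exact Prod.ext ((tileEquiv π).right_inv tp.1) rfl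
    rw [this, List.map_id]

lemma canon_runResult (C : Config2) (L : List (Tile2 × (ℤ × ℤ))) :
    (canon S π hπ0).runResult (mapConfig π C) (mapL π L) =
      mapConfig π (S.runResult C L) := by
  induction L generalizing C with
  | nil => rfl
  | cons tp L ih =>
      show (canon S π hπ0).runResult (place2 (mapConfig π C) (mapTile π tp.1) tp.2)
        (mapL π L) = _
      rw [← mapConfig_place2]
      exact ih (place2 C tp.1 tp.2)

open Classical in
lemma canon_runProb (hmaps : ∀ g ∈ glues S, π g ≤ 4 * S.tiles.card) (hτ : S.temp ≤ 2) (C : Config2) (L : List (Tile2 × (ℤ × ℤ))) :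
    (canon S π hπ0).runProb (mapConfig π C) (mapL π L) = S.runProb C L := by
  induction L generalizing C with
  | nil => rfl
  | cons tp L ih =>
      show (canon S π hπ0).runProb (mapConfig π C) ((mapTile π tp.1, tp.2) :: mapL π L) = _
      rw [TileSystem2.runProb, TileSystem2.runProb]
      have h1 : (if (canon S π hπ0).Attachable (mapConfig π C) (mapTile π tp.1) tp.2
          then (((canon S π hπ0).choices (mapConfig π C) : ℝ))⁻¹ else 0) =
          (if S.Attachable C tp.1 tp.2 then ((S.choices C : ℝ))⁻¹ else 0) := by
        rw [canon_choices S π hπ0 hmaps hτ]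
        by_cases h : S.Attachable C tp.1 tp.2
        · rw [if_pos ((canon_attachable S π hπ0 hmaps hτ C tp.1 tp.2).mpr h), if_pos h]
        · rw [if_neg (fun hc => h ((canon_attachable S π hπ0 hmaps hτ C tp.1 tp.2).mp hc)),
            if_neg h]
      rw [h1, ← mapConfig_place2]
      rw [ih (place2 C tp.1 tp.2)]

lemma canon_seedConfig :
    (canon S π hπ0).seedConfig = mapConfig π S.seedConfig := by
  funext q
  show (if q = (0,0) then some (mapTile π S.seed) else none) = _
  unfold mapConfig TileSystem2.seedConfig
  by_cases hq : q = (0, 0) <;> simp [hq]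

lemma canon_probEvent (hmaps : ∀ g ∈ glues S, π g ≤ 4 * S.tiles.card) (hτ : S.temp ≤ 2) (E : Config2 → Prop) (hE : ∀ C, E (mapConfig π C) ↔ E C) :
    (canon S π hπ0).probEvent E = S.probEvent E := by
  unfold TileSystem2.probEvent TileSystem2.probEventFrom
  rw [canon_seedConfig]
  set S' := canon S π hπ0 with hS'
  have hP : ∀ L : List (Tile2 × (ℤ × ℤ)),
      (S.Terminal (S.runResult S.seedConfig L) ∧ E (S.runResult S.seedConfig L)) ↔
      (S'.Terminal (S'.runResult (mapConfig π S.seedConfig) (listEquiv π L)) ∧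
        E (S'.runResult (mapConfig π S.seedConfig) (listEquiv π L))) := by
    intro L
    have hres : S'.runResult (mapConfig π S.seedConfig) (listEquiv π L) =
        mapConfig π (S.runResult S.seedConfig L) :=
      canon_runResult S π hπ0 S.seedConfig L
    rw [hres, canon_terminal S π hπ0 hmaps hτ, hE]
  have := Equiv.tsum_eq (Equiv.subtypeEquiv (listEquiv π) hP)
    (fun L : {L : List (Tile2 × (ℤ × ℤ)) //
        S'.Terminal (S'.runResult (mapConfig π S.seedConfig) L) ∧
        E (S'.runResult (mapConfig π S.seedConfig) L)} =>
      S'.runProb (mapConfig π S.seedConfig) L.1)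
  rw [← this]
  refine tsum_congr (fun L => ?_)
  exact canon_runProb S π hπ0 hmaps hτ S.seedConfig L.1

end Canon
/-! ### Square events -/

def sqEvent (n : ℕ) : Config2 → Prop :=
  fun C => ∃ v : ℤ × ℤ, shape2 C = (fun q => q + v) '' squareShape n

lemma squareShape_eq_coe (n : ℕ) :
    squareShape n = ↑((Finset.Ico (0:ℤ) (n:ℤ)) ×ˢ (Finset.Ico (0:ℤ) (n:ℤ))) := by
  ext p
  simp only [squareShape, rectShape, Set.mem_setOf_eq, Finset.coe_product, Set.mem_prod,
    Finset.coe_Ico, Set.mem_Ico]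
  tauto

lemma ncard_squareShape (n : ℕ) : (squareShape n).ncard = n * n := by
  rw [squareShape_eq_coe, Set.ncard_coe_finset, Finset.card_product, Int.card_Ico]
  simp

lemma sqEvent_disjoint {n m : ℕ} (hne : n ≠ m) (C : Config2) :
    sqEvent n C → sqEvent m C → False := by
  rintro ⟨v, hv⟩ ⟨w, hw⟩
  have h1 : ((fun q => q + v) '' squareShape n).ncard = n * n := by
    rw [Set.ncard_image_of_injective _ (add_left_injective v), ncard_squareShape]
  have h2 : ((fun q => q + w) '' squareShape m).ncard = m * m := by
    rw [Set.ncard_image_of_injective _ (add_left_injective w), ncard_squareShape]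
  rw [← hv] at h1
  rw [← hw] at h2
  exact hne (Nat.mul_self_inj.mp (h1 ▸ h2))

lemma unique_n (S : TileSystem2) {n m : ℕ}
    (h1 : 1 / 2 < S.probEvent (sqEvent n)) (h2 : 1 / 2 < S.probEvent (sqEvent m)) : n = m := by
  by_contra hne
  have := probEventFrom_pair_le_one S S.seedConfig (sqEvent_disjoint hne)
  unfold TileSystem2.probEvent at h1 h2
  linarith

/-! ### The canonical finite family of systems -/

def CanonSet (K : ℕ) : Set TileSystem2 :=
  {S | S.tiles.card ≤ K ∧
    (∀ t ∈ S.tiles, t.north ≤ 4*K ∧ t.east ≤ 4*K ∧ t.south ≤ 4*K ∧ t.west ≤ 4*K) ∧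
    S.temp ≤ 2 ∧ (∀ x, S.strength x ≤ 2) ∧ (∀ x, 4*K < x → S.strength x = 0)}

lemma canon_mem_CanonSet (S : TileSystem2) (π : Equiv.Perm ℕ) (hπ0 : π 0 = 0)
    (hmaps : ∀ g ∈ glues S, π g ≤ 4 * S.tiles.card) (hτ : S.temp ≤ 2) {K : ℕ}
    (hK : S.tiles.card ≤ K) : canon S π hπ0 ∈ CanonSet K := by
  refine ⟨?_, ?_, hτ, ?_, ?_⟩
  · exact le_trans Finset.card_image_le hK
  · intro t' ht'
    rcases Finset.mem_image.mp ht' with ⟨t, ht, rfl⟩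
    obtain ⟨hN, hE, hS, hW⟩ := mem_glues ht
    have b1 := hmaps _ hN
    have b2 := hmaps _ hE
    have b3 := hmaps _ hS
    have b4 := hmaps _ hW
    exact ⟨by show π t.north ≤ _; omega, by show π t.east ≤ _; omega,
      by show π t.south ≤ _; omega, by show π t.west ≤ _; omega⟩
  · intro x
    show (if x ≤ 4 * S.tiles.card then min (S.strength (π.symm x)) 2 else 0) ≤ 2
    split <;> omega
  · intro x hx
    show (if x ≤ 4 * S.tiles.card then min (S.strength (π.symm x)) 2 else 0) = 0
    rw [if_neg (by omega)]

lemma CanonSet_mono {K K' : ℕ} (h : K ≤ K') : CanonSet K ⊆ CanonSet K' := by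
  rintro S ⟨h1, h2, h3, h4, h5⟩
  refine ⟨le_trans h1 h, fun t ht => ?_, h3, h4, fun x hx => h5 x (by omega)⟩
  obtain ⟨a, b, c, d⟩ := h2 t ht
  exact ⟨by omega, by omega, by omega, by omega⟩

instance : Inhabited TileSystem2 :=
  ⟨⟨{⟨0,0,0,0⟩}, ⟨0,0,0,0⟩, fun _ => 0, 0, Finset.mem_singleton_self _, rfl⟩⟩

/-- Extract a canonical witness from a successful small system. -/
lemma exists_canon_witness {n : ℕ} (S : TileSystem2) (htemp : S.temp = 1 ∨ S.temp = 2)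
    (hp : 1 / 2 < S.probEvent (sqEvent n)) {K : ℕ} (hK : S.tiles.card ≤ K) :
    ∃ S' ∈ CanonSet K, 1 / 2 < S'.probEvent (sqEvent n) := by
  have hτ : S.temp ≤ 2 := by rcases htemp with h | h <;> omega
  obtain ⟨π, hπ0, hmaps⟩ := exists_perm_maps (4 * S.tiles.card)
    ((glues S).filter (fun g => 4 * S.tiles.card < g)).card (glues S)
    (zero_mem_glues S) (card_glues S) le_rfl
  refine ⟨canon S π hπ0, canon_mem_CanonSet S π hπ0 hmaps hτ hK, ?_⟩
  rw [canon_probEvent S π hπ0 hmaps hτ (sqEvent n)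
    (fun C => by simp [sqEvent, shape2_mapConfig])]
  exact hp
/-! ### Counting the canonical systems -/

def tileBox (K : ℕ) : Finset Tile2 :=
  ((Finset.range (4*K+1)) ×ˢ (Finset.range (4*K+1)) ×ˢ (Finset.range (4*K+1)) ×ˢ
    (Finset.range (4*K+1))).image (fun q => ⟨q.1, q.2.1, q.2.2.1, q.2.2.2⟩)

lemma mem_tileBox {K : ℕ} {t : Tile2} (h1 : t.north ≤ 4*K) (h2 : t.east ≤ 4*K)
    (h3 : t.south ≤ 4*K) (h4 : t.west ≤ 4*K) : t ∈ tileBox K := by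
  refine Finset.mem_image.mpr ⟨(t.north, t.east, t.south, t.west), ?_, rfl⟩
  simp only [Finset.mem_product, Finset.mem_range]
  omega

lemma card_tileBox (K : ℕ) : (tileBox K).card ≤ (4*K+1)^4 := by
  refine le_trans Finset.card_image_le ?_
  simp only [Finset.card_product, Finset.card_range]
  ring_nf
  omega

lemma one_le_card_tileBox (K : ℕ) : 1 ≤ (tileBox K).card :=
  Finset.card_pos.mpr ⟨⟨0,0,0,0⟩, mem_tileBox (Nat.zero_le _) (Nat.zero_le _)
    (Nat.zero_le _) (Nat.zero_le _)⟩

def tilesBox (K : ℕ) : Finset (Finset Tile2) :=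
  (Finset.range (K+1)).biUnion (fun j => Finset.powersetCard j (tileBox K))

lemma mem_tilesBox {K : ℕ} {s : Finset Tile2} (hsub : s ⊆ tileBox K) (hcard : s.card ≤ K) :
    s ∈ tilesBox K := by
  refine Finset.mem_biUnion.mpr ⟨s.card, Finset.mem_range.mpr (by omega), ?_⟩
  exact Finset.mem_powersetCard.mpr ⟨hsub, rfl⟩

lemma card_tilesBox (K : ℕ) : (tilesBox K).card ≤ (K+1) * ((4*K+1)^4)^K := by
  refine le_trans (Finset.card_biUnion_le) ?_
  have hb : ∀ j ∈ Finset.range (K+1), (Finset.powersetCard j (tileBox K)).card ≤ ((4*K+1)^4)^K := by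
    intro j hj
    rw [Finset.card_powersetCard]
    calc ((tileBox K).card).choose j ≤ (tileBox K).card ^ j := Nat.choose_le_pow _ _
      _ ≤ ((4*K+1)^4)^j := Nat.pow_le_pow_left (card_tileBox K) j
      _ ≤ ((4*K+1)^4)^K := Nat.pow_le_pow_right (by positivity) (by
          have := Finset.mem_range.mp hj; omega)
  calc ∑ j ∈ Finset.range (K+1), (Finset.powersetCard j (tileBox K)).card
      ≤ ∑ _j ∈ Finset.range (K+1), ((4*K+1)^4)^K := Finset.sum_le_sum hb
    _ = (K+1) * ((4*K+1)^4)^K := by rw [Finset.sum_const, Finset.card_range, smul_eq_mul]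

def sysBox (K : ℕ) : Finset (Finset Tile2 × Tile2 × ℕ × (Fin (4*K+1) → ℕ)) :=
  (tilesBox K) ×ˢ (tileBox K) ×ˢ (Finset.range 3) ×ˢ
    (Fintype.piFinset (fun _ => Finset.range 3))

noncomputable def sysEnc (K : ℕ) (S : TileSystem2) :
    Finset Tile2 × Tile2 × ℕ × (Fin (4*K+1) → ℕ) :=
  (S.tiles, S.seed, S.temp, fun i => S.strength i)

lemma sysEnc_mem {K : ℕ} {S : TileSystem2} (hS : S ∈ CanonSet K) :
    sysEnc K S ∈ sysBox K := by
  obtain ⟨h1, h2, h3, h4, _⟩ := hS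
  unfold sysEnc
  have hsub : S.tiles ⊆ tileBox K := by
    intro t ht
    obtain ⟨a, b, c, d⟩ := h2 t ht
    exact mem_tileBox a b c d
  refine Finset.mem_product.mpr ⟨mem_tilesBox hsub h1, Finset.mem_product.mpr
    ⟨hsub S.seed_mem, Finset.mem_product.mpr ⟨Finset.mem_range.mpr (show S.temp < 3 by omega), ?_⟩⟩⟩
  refine Fintype.mem_piFinset.mpr (fun i => Finset.mem_range.mpr ?_)
  show S.strength i < 3
  have := h4 i
  omega

lemma sysEnc_injOn (K : ℕ) : Set.InjOn (sysEnc K) (CanonSet K) := by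
  intro S₁ hS₁ S₂ hS₂ he
  obtain ⟨ht, hs, htmp, hst⟩ : S₁.tiles = S₂.tiles ∧ S₁.seed = S₂.seed ∧
      S₁.temp = S₂.temp ∧ (fun i : Fin (4*K+1) => S₁.strength i) =
        (fun i : Fin (4*K+1) => S₂.strength i) := by
    unfold sysEnc at he
    exact ⟨congrArg Prod.fst he, congrArg (fun x => x.2.1) he,
      congrArg (fun x => x.2.2.1) he, congrArg (fun x => x.2.2.2) he⟩
  have hstr : S₁.strength = S₂.strength := by
    funext x
    by_cases hx : x ≤ 4*K
    · have : x < 4*K+1 := by omega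
      exact congrFun hst ⟨x, this⟩
    · rw [hS₁.2.2.2.2 x (by omega), hS₂.2.2.2.2 x (by omega)]
  rcases S₁ with ⟨t1, s1, st1, tp1, sm1, ns1⟩
  rcases S₂ with ⟨t2, s2, st2, tp2, sm2, ns2⟩
  simp only [TileSystem2.mk.injEq]
  exact ⟨ht, hs, hstr, htmp⟩

lemma CanonSet_finite (K : ℕ) : (CanonSet K).Finite := by
  refine Set.Finite.of_finite_image ?_ (sysEnc_injOn K)
  exact Set.Finite.subset (Finset.finite_toSet (sysBox K)) (by
    rintro _ ⟨S, hS, rfl⟩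
    exact sysEnc_mem hS)

lemma ncard_CanonSet_le (K : ℕ) (hK : 1 ≤ K) :
    (CanonSet K).ncard ≤ (4*K+1)^(8*K+9) := by
  have h1 : (CanonSet K).ncard = ((sysEnc K) '' CanonSet K).ncard :=
    (Set.ncard_image_of_injOn (sysEnc_injOn K)).symm
  have h2 : ((sysEnc K) '' CanonSet K).ncard ≤ (sysBox K).card := by
    rw [← Set.ncard_coe_finset]
    refine Set.ncard_le_ncard ?_ (Finset.finite_toSet _)
    rintro _ ⟨S, hS, rfl⟩
    exact sysEnc_mem hS
  have h3 : (sysBox K).card ≤ (K+1) * ((4*K+1)^4)^K * ((4*K+1)^4 * (3 * 3^(4*K+1))) := by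
    unfold sysBox
    simp only [Finset.card_product, Finset.card_range, Fintype.card_piFinset]
    have hpi : (∏ _x : Fin (4*K+1), (3:ℕ)) = 3^(4*K+1) := by
      simp [Finset.prod_const]
    rw [hpi]
    exact Nat.mul_le_mul (card_tilesBox K)
      (Nat.mul_le_mul (card_tileBox K) le_rfl)
  have hbase : 3 ≤ 4*K+1 := by omega
  have hfinal : (K+1) * ((4*K+1)^4)^K * ((4*K+1)^4 * (3 * 3^(4*K+1))) ≤ (4*K+1)^(8*K+9) := by
    have e1 : (K+1) ≤ (4*K+1)^1 := by simpa using by omega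
    have e2 : ((4*K+1)^4)^K = (4*K+1)^(4*K) := by rw [← pow_mul]
    have e3 : (3 : ℕ) ≤ (4*K+1)^1 := by simpa using hbase
    have e4 : (3 : ℕ)^(4*K+1) ≤ (4*K+1)^(4*K+1) := Nat.pow_le_pow_left hbase _
    calc (K+1) * ((4*K+1)^4)^K * ((4*K+1)^4 * (3 * 3^(4*K+1)))
        ≤ (4*K+1)^1 * (4*K+1)^(4*K) * ((4*K+1)^4 * ((4*K+1)^1 * (4*K+1)^(4*K+1))) := by
          rw [e2]
          exact Nat.mul_le_mul (Nat.mul_le_mul e1 le_rfl)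
            (Nat.mul_le_mul le_rfl (Nat.mul_le_mul e3 e4))
      _ = (4*K+1)^(1 + 4*K + (4 + (1 + (4*K+1)))) := by ring
      _ ≤ (4*K+1)^(8*K+9) := Nat.pow_le_pow_right (by omega) (by omega)
  omega

/-- The key counting bound: the set of sizes `n` for which some canonical system
with parameter `K` succeeds has at most `ncard (CanonSet K)` elements. -/
lemma key_count {B : Set ℕ} {K : ℕ}
    (hB : ∀ n ∈ B, ∃ S' ∈ CanonSet K, 1 / 2 < S'.probEvent (sqEvent n)) :
    B.ncard ≤ (CanonSet K).ncard := by
  classical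
  set f : ℕ → TileSystem2 := fun n =>
    if h : ∃ S' ∈ CanonSet K, 1 / 2 < S'.probEvent (sqEvent n) then h.choose else default
    with hf
  have hspec : ∀ n ∈ B, f n ∈ CanonSet K ∧ 1 / 2 < (f n).probEvent (sqEvent n) := by
    intro n hn
    have h := hB n hn
    rw [hf]
    simp only [dif_pos h]
    exact ⟨h.choose_spec.1, h.choose_spec.2⟩
  refine Set.ncard_le_ncard_of_injOn f (fun n hn => (hspec n hn).1) ?_ (CanonSet_finite K)
  intro n hn m hm he
  exact unique_n (f n) (hspec n hn).2 (he ▸ (hspec m hm).2)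
/-! ### Analytic estimates -/

lemma log_le_two_sqrt {y : ℝ} (hy : 0 ≤ y) : Real.log y ≤ 2 * Real.sqrt y := by
  rcases eq_or_lt_of_le hy with rfl | hy'
  · simp [Real.log_zero]
  have h1 : Real.log (Real.sqrt y) ≤ Real.sqrt y - 1 :=
    Real.log_le_sub_one_of_pos (Real.sqrt_pos.mpr hy')
  rw [Real.log_sqrt hy] at h1
  nlinarith [Real.sqrt_nonneg y]

lemma log_le_half {y : ℝ} (hy : 16 ≤ y) : Real.log y ≤ y / 2 := by
  have h0 : (0:ℝ) ≤ y := by linarith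
  have h1 : Real.log y ≤ 2 * Real.sqrt y := log_le_two_sqrt h0
  have h4 : (4:ℝ) ≤ Real.sqrt y := (Real.le_sqrt (by norm_num) h0).mpr (by nlinarith)
  have hms : Real.sqrt y * Real.sqrt y = y := Real.mul_self_sqrt h0
  nlinarith

lemma loglog_ge_one {n : ℕ} (hn : 16 ≤ n) : 1 ≤ Real.log (Real.log n) := by
  have h2 : Real.exp 1 ≤ Real.log 16 := by
    have : Real.log 16 = 4 * Real.log 2 := by
      rw [show (16:ℝ) = 2^4 by norm_num, Real.log_pow]
      norm_num
    rw [this]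
    have := Real.log_two_gt_d9
    have := Real.exp_one_lt_d9
    linarith
  have h3 : Real.log 16 ≤ Real.log n :=
    Real.log_le_log (by norm_num) (by exact_mod_cast hn)
  calc (1:ℝ) = Real.log (Real.exp 1) := (Real.log_exp 1).symm
    _ ≤ Real.log (Real.log n) :=
      Real.log_le_log (Real.exp_pos 1) (by linarith)

lemma log_pos_of_16 {n : ℕ} (hn : 16 ≤ n) : (1:ℝ) < Real.log n := by
  have h3 : Real.log 16 ≤ Real.log n :=
    Real.log_le_log (by norm_num) (by exact_mod_cast hn)
  have : (Real.exp 1) ≤ Real.log 16 := by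
    have h : Real.log 16 = 4 * Real.log 2 := by
      rw [show (16:ℝ) = 2^4 by norm_num, Real.log_pow]; norm_num
    rw [h]
    have := Real.log_two_gt_d9
    have := Real.exp_one_lt_d9
    linarith
  have := Real.add_one_le_exp 1
  linarith

/-- Ratio comparison: for `16 ≤ n ≤ N` with `loglog N ≥ 16`,
`log n / loglog n ≤ 2 log N / loglog N`. -/
lemma ratio_le {n N : ℕ} (hn : 16 ≤ n) (hnN : n ≤ N)
    (hy : 16 ≤ Real.log (Real.log N)) :
    Real.log n / Real.log (Real.log n) ≤
      2 * (Real.log N / Real.log (Real.log N)) := by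
  set x := Real.log (N : ℝ) with hxdef
  set y := Real.log x with hydef
  have hN16 : 16 ≤ N := le_trans hn hnN
  have hx1 : (1:ℝ) < x := log_pos_of_16 hN16
  have hy0 : (0:ℝ) < y := by linarith
  set a := Real.log (n : ℝ) with hadef
  set b := Real.log a with hbdef
  have hb1 : (1:ℝ) ≤ b := loglog_ge_one hn
  have hax : a ≤ x := Real.log_le_log
    (by exact_mod_cast Nat.lt_of_lt_of_le (by norm_num) hn) (by exact_mod_cast hnN)
  have ha0 : (0:ℝ) < a := by
    have := log_pos_of_16 hn; linarith
  by_cases hcase : a ≤ x / y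
  · have h1 : a / b ≤ a := div_le_self (le_of_lt ha0) hb1
    have h2 : x / y ≤ 2 * (x / y) := by
      have : 0 ≤ x / y := le_of_lt (div_pos (by linarith) hy0)
      linarith
    linarith
  · push_neg at hcase
    have hb2 : y / 2 ≤ b := by
      have hxy0 : 0 < x / y := div_pos (by linarith) hy0
      have h1 : Real.log (x / y) ≤ b := Real.log_le_log hxy0 (le_of_lt hcase)
      have h2 : Real.log (x / y) = Real.log x - Real.log y :=
        Real.log_div (by linarith) (by linarith)
      have h3 : Real.log y ≤ y / 2 := log_le_half hy
      have h4 : Real.log x = y := rfl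
      linarith
    have hb0 : (0:ℝ) < y / 2 := by linarith
    calc a / b ≤ x / (y / 2) :=
          div_le_div₀ (by linarith) hax hb0 hb2
      _ = 2 * (x / y) := by
          field_simp
  
lemma tendsto_sqrt_nat :
    Filter.Tendsto (fun N : ℕ => Real.sqrt N) Filter.atTop Filter.atTop := by
  refine Filter.tendsto_atTop.mpr (fun b => ?_)
  obtain ⟨M, hM⟩ : ∃ M : ℕ, (max b 0)^2 ≤ (M:ℝ) := by
    obtain ⟨M, hM⟩ := exists_nat_ge ((max b 0)^2)
    exact ⟨M, hM⟩
  refine Filter.eventually_atTop.mpr ⟨M, fun N hN => ?_⟩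
  have h1 : (max b 0)^2 ≤ (N:ℝ) := le_trans hM (by exact_mod_cast hN)
  have h2 := (Real.le_sqrt (le_max_right b 0) (Nat.cast_nonneg N)).mpr h1
  exact le_trans (le_max_left b 0) h2

lemma ncard_Icc_nat (N : ℕ) : (Set.Icc 1 N : Set ℕ).ncard = N := by
  rw [← Nat.card_coe_set_eq, Nat.card_eq_card_toFinset]
  simp [Nat.card_Icc]
/-! ### The main density argument -/

def goodProp (d : ℝ) (n : ℕ) : Prop :=
  ∀ S : TileSystem2, (S.temp = 1 ∨ S.temp = 2) →
    1 / 2 < S.probEvent (fun C =>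
        ∃ v : ℤ × ℤ, shape2 C = (fun q => q + v) '' squareShape n) →
    d * (Real.log n / Real.log (Real.log n)) ≤ (S.tiles.card : ℝ)

open Filter in
set_option maxHeartbeats 1000000 in
lemma main_density :
    Tendsto (fun N : ℕ =>
        (Set.ncard {n : ℕ | 1 ≤ n ∧ n ≤ N ∧ goodProp (1/100) n} : ℝ) / (N : ℝ))
      atTop (nhds 1) := by
  classical
  set d : ℝ := 1/100 with hddef
  set Bad : ℕ → Set ℕ := fun N => {n | 1 ≤ n ∧ n ≤ N ∧ ¬ goodProp d n} with hBaddef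
  set Good : ℕ → Set ℕ := fun N => {n | 1 ≤ n ∧ n ≤ N ∧ goodProp d n} with hGooddef
  have hGfin : ∀ N, (Good N).Finite := fun N =>
    (Set.finite_Icc 1 N).subset (fun n hn => ⟨hn.1, hn.2.1⟩)
  have hBfin : ∀ N, (Bad N).Finite := fun N =>
    (Set.finite_Icc 1 N).subset (fun n hn => ⟨hn.1, hn.2.1⟩)
  have hsplit : ∀ N : ℕ, (Good N).ncard + (Bad N).ncard = N := by
    intro N
    have hunion : Good N ∪ Bad N = Set.Icc 1 N := by
      ext n
      simp only [hGooddef, hBaddef, Set.mem_union, Set.mem_setOf_eq, Set.mem_Icc]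
      tauto
    have hdisj : Disjoint (Good N) (Bad N) := by
      rw [Set.disjoint_left]
      rintro n ⟨_, _, h⟩ ⟨_, _, h'⟩
      exact h' h
    rw [← Set.ncard_union_eq hdisj (hGfin N) (hBfin N), hunion, ncard_Icc_nat]
  have hx : Tendsto (fun N : ℕ => Real.log N) atTop atTop :=
    Real.tendsto_log_atTop.comp tendsto_natCast_atTop_atTop
  have hy : Tendsto (fun N : ℕ => Real.log (Real.log N)) atTop atTop :=
    Real.tendsto_log_atTop.comp hx
  -- the eventual bound on the bad set
  have hev : ∀ᶠ N : ℕ in atTop, ((Bad N).ncard : ℝ) ≤ 15 + Real.sqrt N := by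
    have e1 : ∀ᶠ N : ℕ in atTop, (16:ℕ) ≤ N := eventually_atTop.mpr ⟨16, fun N h => h⟩
    have e2 : ∀ᶠ N : ℕ in atTop, (16:ℝ) ≤ Real.log (Real.log N) :=
      hy.eventually_ge_atTop 16
    have e3 : ∀ᶠ N : ℕ in atTop, (64000000:ℝ) ≤ Real.log N := hx.eventually_ge_atTop _
    filter_upwards [e1, e2, e3] with N hN16 hy16 hxbig
    set x := Real.log (N:ℝ) with hxdef
    set y := Real.log x with hydef
    have hx0 : (0:ℝ) < x := by linarith
    have hy0 : (0:ℝ) < y := by linarith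
    -- x / y is large
    have hsx : Real.sqrt x * Real.sqrt x = x := Real.mul_self_sqrt (le_of_lt hx0)
    have hsx0 : (0:ℝ) < Real.sqrt x := Real.sqrt_pos.mpr hx0
    have hsxbig : (4000:ℝ) ≤ Real.sqrt x :=
      (Real.le_sqrt (by norm_num) (le_of_lt hx0)).mpr (by nlinarith)
    have hylt : y ≤ 2 * Real.sqrt x := log_le_two_sqrt (le_of_lt hx0)
    have hxy : (2000:ℝ) ≤ x / y := by
      have h1 : x / (2 * Real.sqrt x) ≤ x / y :=
        div_le_div_of_nonneg_left (le_of_lt hx0) hy0 hylt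
      have h2 : x / (2 * Real.sqrt x) = Real.sqrt x / 2 := by
        rw [eq_div_iff (by norm_num : (2:ℝ) ≠ 0), div_mul_eq_mul_div,
          div_eq_iff (by positivity : (2:ℝ) * Real.sqrt x ≠ 0)]
        nlinarith [hsx]
      rw [h2] at h1
      linarith
    set K : ℕ := Nat.floor (2 * d * (x / y)) with hKdef
    have hxy0 : (0:ℝ) ≤ x / y := le_of_lt (div_pos hx0 hy0)
    have hKle : (K:ℝ) ≤ 2 * d * (x / y) := Nat.floor_le (by rw [hddef]; positivity)
    have hK1 : 1 ≤ K := Nat.le_floor (by rw [hddef]; push_cast; nlinarith)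
    -- bad n between 16 and N are counted by canonical systems
    have hBB : ({n : ℕ | 16 ≤ n ∧ n ≤ N ∧ ¬ goodProp d n}).ncard ≤
        (CanonSet K).ncard := by
      refine key_count (fun n hn => ?_)
      obtain ⟨hn16, hnN, hbad⟩ := hn
      rw [goodProp] at hbad
      push_neg at hbad
      obtain ⟨S, htemp, hp, hlt⟩ := hbad
      have hratio := ratio_le hn16 hnN hy16
      have hle2 : d * (Real.log n / Real.log (Real.log n)) ≤ 2 * d * (x / y) := by
        have := mul_le_mul_of_nonneg_left hratio (show (0:ℝ) ≤ d by rw [hddef]; norm_num)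
        calc d * (Real.log n / Real.log (Real.log n))
            ≤ d * (2 * (x / y)) := this
          _ = 2 * d * (x / y) := by ring
      have hcard : S.tiles.card ≤ K :=
        Nat.le_floor (le_of_lt (lt_of_lt_of_le hlt hle2))
      exact exists_canon_witness S htemp hp hcard
    have hcanon : (CanonSet K).ncard ≤ (4*K+1)^(8*K+9) := ncard_CanonSet_le K hK1
    -- the power is at most sqrt N
    have hNpos : (0:ℝ) < (N:ℝ) := by
      have : (0:ℕ) < N := by omega
      exact_mod_cast this
    have hsqN : Real.sqrt N = Real.exp (x / 2) := by
      have hNe : (N:ℝ) = Real.exp (x/2) * Real.exp (x/2) := by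
        rw [← Real.exp_add, show x/2 + x/2 = x by ring]
        exact (Real.exp_log hNpos).symm
      rw [hNe, Real.sqrt_mul_self (le_of_lt (Real.exp_pos _))]
    have hpow : (((4*K+1)^(8*K+9) : ℕ) : ℝ) ≤ Real.sqrt N := by
      rw [Nat.cast_pow]
      set A : ℝ := ((4*K+1 : ℕ):ℝ)^(8*K+9) with hAdef
      have hA0 : (0:ℝ) < ((4*K+1:ℕ):ℝ) := by positivity
      have hApos : (0:ℝ) < A := by positivity
      have hb1 : ((4*K+1:ℕ):ℝ) ≤ x := by
        push_cast
        have : (K:ℝ) ≤ x / 800 := by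
          calc (K:ℝ) ≤ 2 * d * (x/y) := hKle
            _ ≤ 2 * d * (x/16) := by
                rw [hddef]
                have : x / y ≤ x / 16 :=
                  div_le_div_of_nonneg_left (le_of_lt hx0) (by norm_num) hy16
                nlinarith
            _ = x / 800 := by rw [hddef]; ring
        nlinarith
      have hb2 : Real.log ((4*K+1:ℕ):ℝ) ≤ y := Real.log_le_log hA0 hb1
      have hb2' : (0:ℝ) ≤ Real.log ((4*K+1:ℕ):ℝ) := by
        refine Real.log_nonneg ?_
        have : (1:ℕ) ≤ 4*K+1 := by omega
        exact_mod_cast this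
      have hb3 : ((8*K+9 : ℕ):ℝ) ≤ (17/100) * (x/y) := by
        push_cast
        have h9 : (9:ℝ) ≤ (1/100) * (x/y) := by nlinarith
        have h8 : (8:ℝ) * K ≤ (16/100) * (x/y) := by
          have := hKle
          rw [hddef] at this
          nlinarith
        linarith
      have hb3' : (0:ℝ) ≤ (17/100) * (x/y) := by positivity
      have hlogA : Real.log A = ((8*K+9:ℕ):ℝ) * Real.log ((4*K+1:ℕ):ℝ) := by
        rw [hAdef, Real.log_pow]
      have hmain : Real.log A ≤ x / 2 := by
        rw [hlogA]
        calc ((8*K+9:ℕ):ℝ) * Real.log ((4*K+1:ℕ):ℝ)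
            ≤ ((17/100) * (x/y)) * y := by
              refine mul_le_mul hb3 hb2 hb2' hb3'
          _ = (17/100) * x := by
              field_simp
          _ ≤ x / 2 := by linarith
      calc A = Real.exp (Real.log A) := (Real.exp_log hApos).symm
        _ ≤ Real.exp (x/2) := Real.exp_le_exp.mpr hmain
        _ = Real.sqrt N := hsqN.symm
    -- assemble
    have hsub : Bad N ⊆ (Set.Icc 1 15) ∪ {n : ℕ | 16 ≤ n ∧ n ≤ N ∧ ¬ goodProp d n} := by
      rintro n ⟨h1, h2, h3⟩
      by_cases h : 16 ≤ n
      · exact Or.inr ⟨h, h2, h3⟩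
      · exact Or.inl ⟨h1, by omega⟩
    have hBBfin : ({n : ℕ | 16 ≤ n ∧ n ≤ N ∧ ¬ goodProp d n}).Finite :=
      (Set.finite_Icc 16 N).subset (fun n hn => ⟨hn.1, hn.2.1⟩)
    have hcount : (Bad N).ncard ≤ 15 + (4*K+1)^(8*K+9) := by
      calc (Bad N).ncard
          ≤ ((Set.Icc 1 15) ∪ {n : ℕ | 16 ≤ n ∧ n ≤ N ∧ ¬ goodProp d n}).ncard :=
            Set.ncard_le_ncard hsub ((Set.finite_Icc 1 15).union hBBfin)
        _ ≤ (Set.Icc 1 15 : Set ℕ).ncard +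
              ({n : ℕ | 16 ≤ n ∧ n ≤ N ∧ ¬ goodProp d n}).ncard :=
            Set.ncard_union_le _ _
        _ ≤ 15 + (4*K+1)^(8*K+9) := by
            rw [ncard_Icc_nat]
            omega
    calc ((Bad N).ncard : ℝ) ≤ ((15 + (4*K+1)^(8*K+9) : ℕ) : ℝ) := by exact_mod_cast hcount
      _ = 15 + (((4*K+1)^(8*K+9) : ℕ) : ℝ) := by push_cast; ring
      _ ≤ 15 + Real.sqrt N := by linarith [hpow]
  -- squeeze
  have hzero : Tendsto (fun N : ℕ => (15 + Real.sqrt N) / N) atTop (nhds 0) := by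
    have h1 := tendsto_const_div_atTop_nhds_zero_nat (15:ℝ)
    have h2 : Tendsto (fun N : ℕ => Real.sqrt N / N) atTop (nhds 0) := by
      simp only [Real.sqrt_div_self', one_div]
      exact tendsto_sqrt_nat.inv_tendsto_atTop
    have h3 := h1.add h2
    simp only [add_zero] at h3
    convert h3 using 2 with N
    rw [add_div]
  refine tendsto_of_tendsto_of_tendsto_of_le_of_le'
    (g := fun N : ℕ => 1 - (15 + Real.sqrt N) / N) (h := fun _ => (1:ℝ))
    (by simpa using (tendsto_const_nhds (x := (1:ℝ)) (f := atTop)).sub hzero)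
    tendsto_const_nhds ?_ ?_
  · filter_upwards [hev, eventually_atTop.mpr ⟨1, fun (N:ℕ) h => h⟩] with N hN h1N
    have hNpos : (0:ℝ) < (N:ℝ) := by exact_mod_cast h1N
    have hG : ((Good N).ncard : ℝ) = (N:ℝ) - ((Bad N).ncard : ℝ) := by
      have := hsplit N
      have : ((Good N).ncard : ℝ) + ((Bad N).ncard : ℝ) = (N:ℝ) := by exact_mod_cast this
      linarith
    show 1 - (15 + Real.sqrt N) / N ≤ ((Good N).ncard : ℝ) / N
    rw [hG]
    have h6 : ((Bad N).ncard : ℝ) / N ≤ (15 + Real.sqrt N) / N :=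
      (div_le_div_iff_of_pos_right hNpos).mpr hN
    have h4 : ((N:ℝ) - ((Bad N).ncard : ℝ)) / N = 1 - ((Bad N).ncard : ℝ) / N := by
      field_simp
    rw [h4]
    linarith
  · filter_upwards [] with N
    show ((Good N).ncard : ℝ) / N ≤ 1
    rcases Nat.eq_zero_or_pos N with rfl | hN
    · simp
    · have hle : (Good N).ncard ≤ N := by
        have := hsplit N
        omega
      rw [div_le_one (by exact_mod_cast hN)]
      exact_mod_cast hle
/-- **Theorem (Kolmogorov lower bound for probabilistic square assembly).**
There is a constant `d > 0` such that the set of positive integers `n` with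
the following property has natural density 1: every 2D tile system of
temperature 1 or 2 that terminally assembles an `n × n` square (up to
translation) with probability greater than `1/2` has tile complexity at least
`d · log n / log log n`. -/
theorem square_prob_kolmogorov_lower_bound :
    ∃ d : ℝ, 0 < d ∧
      Filter.Tendsto
        (fun N : ℕ =>
          (Set.ncard {n : ℕ | 1 ≤ n ∧ n ≤ N ∧
            ∀ S : TileSystem2, (S.temp = 1 ∨ S.temp = 2) →
              1 / 2 < S.probEvent (fun C =>
                  ∃ v : ℤ × ℤ, shape2 C = (fun q => q + v) '' squareShape n) →
              d * (Real.log n / Real.log (Real.log n)) ≤ (S.tiles.card : ℝ)} : ℝ) /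
            (N : ℝ))
        Filter.atTop (nhds 1) := by
  exact ⟨1/100, by norm_num, main_density⟩
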